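/- Let γ > 1. The function m_a(ξ) = e^{a^{1/γ}|ξ|₁ − (1/2)a|ξ|^γ} on ℝ² satisfies: there is a constant C depending only on γ such that |m_a(ξ)| ≤ C for all a ≥ 0 and ξ ∈ ℝ², and for each fixed a > 0, m_a(ξ) → 0 exponentially fast as |ξ| → ∞. -/
import Mathlib

/-- Elementary sublinear-vs-superlinear bound: for `γ > 1`, `K, A > 0`,
`K r - A r^γ ≤ K (K/A)^(1/(γ-1))` for all `r ≥ 0`. -/
lemma aux_young (γ K A : ℝ) (hγ : 1 < γ) (hK : 0 < K) (hA : 0 < A) :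
    ∀ r : ℝ, 0 ≤ r → K * r - A * r ^ γ ≤ K * (K / A) ^ (1 / (γ - 1)) := by
  intro r hr
  set R : ℝ := (K / A) ^ (1 / (γ - 1)) with hRdef
  have hKA : 0 < K / A := div_pos hK hA
  have hR : 0 < R := Real.rpow_pos_of_pos hKA _
  have hγ1 : γ - 1 ≠ 0 := by linarith
  rcases le_total r R with h | h
  · have h1 : 0 ≤ A * r ^ γ := mul_nonneg hA.le (Real.rpow_nonneg hr _)
    nlinarith [mul_le_mul_of_nonneg_left h hK.le]
  · have hrpos : 0 < r := lt_of_lt_of_le hR h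
    have hRpow : R ^ (γ - 1) = K / A := by
      rw [hRdef, ← Real.rpow_mul hKA.le, one_div, inv_mul_cancel₀ hγ1, Real.rpow_one]
    have hmono : K / A ≤ r ^ (γ - 1) := by
      rw [← hRpow]
      exact Real.rpow_le_rpow hR.le h (by linarith)
    have hsplit : r ^ γ = r ^ (γ - 1) * r := by
      rw [← Real.rpow_add_one hrpos.ne']
      congr 1
      ring
    have h2 : K * r ≤ A * r ^ γ := by
      rw [hsplit]
      have : K / A * r ≤ r ^ (γ - 1) * r := mul_le_mul_of_nonneg_right hmono hrpos.le
      calc K * r = A * (K / A * r) := by field_simp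
        _ ≤ A * (r ^ (γ - 1) * r) := mul_le_mul_of_nonneg_left this hA.le
    nlinarith

theorem gevrey_multiplier_symbol_bounds (γ : ℝ) (hγ : 1 < γ) :
    (∃ C : ℝ, 0 < C ∧ ∀ a : ℝ, 0 ≤ a → ∀ ξ : ℝ × ℝ,
        |Real.exp (a ^ (1/γ) * (|ξ.1| + |ξ.2|)
          - (1/2) * a * (Real.sqrt (ξ.1 ^ 2 + ξ.2 ^ 2)) ^ γ)| ≤ C) ∧
    (∀ a : ℝ, 0 < a → ∃ c : ℝ, 0 < c ∧ ∃ C' : ℝ, 0 < C' ∧ ∀ ξ : ℝ × ℝ,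
        Real.exp (a ^ (1/γ) * (|ξ.1| + |ξ.2|)
          - (1/2) * a * (Real.sqrt (ξ.1 ^ 2 + ξ.2 ^ 2)) ^ γ)
          ≤ C' * Real.exp (-c * Real.sqrt (ξ.1 ^ 2 + ξ.2 ^ 2))) := by
  have hγ0 : γ ≠ 0 := by linarith
  constructor
  · refine ⟨Real.exp (2 * (2 / (1/2 : ℝ)) ^ (1 / (γ - 1))), Real.exp_pos _, ?_⟩
    intro a ha ξ
    rw [Real.abs_exp, Real.exp_le_exp]
    set r : ℝ := Real.sqrt (ξ.1 ^ 2 + ξ.2 ^ 2) with hrdef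
    have hr : 0 ≤ r := Real.sqrt_nonneg _
    have h1 : |ξ.1| ≤ r := by
      rw [hrdef, ← Real.sqrt_sq_eq_abs]
      exact Real.sqrt_le_sqrt (by nlinarith [sq_nonneg ξ.2])
    have h2 : |ξ.2| ≤ r := by
      rw [hrdef, ← Real.sqrt_sq_eq_abs]
      exact Real.sqrt_le_sqrt (by nlinarith [sq_nonneg ξ.1])
    set t : ℝ := a ^ (1/γ) * r with htdef
    have hap : 0 ≤ a ^ (1/γ) := Real.rpow_nonneg ha _
    have ht : 0 ≤ t := mul_nonneg hap hr
    have key : a * r ^ γ = t ^ γ := by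
      rw [htdef, Real.mul_rpow hap hr, ← Real.rpow_mul ha, one_div,
        inv_mul_cancel₀ hγ0, Real.rpow_one]
    have hlin : a ^ (1/γ) * (|ξ.1| + |ξ.2|) ≤ 2 * t := by
      rw [htdef]; nlinarith
    have hbd := aux_young γ 2 (1/2) hγ two_pos one_half_pos t ht
    have key2 : (1/2 : ℝ) * a * r ^ γ = (1/2 : ℝ) * t ^ γ := by
      rw [mul_assoc, key]
    linarith
  · intro a ha
    set K : ℝ := 2 * a ^ (1/γ) + 1 with hKdef
    have hap : 0 ≤ a ^ (1/γ) := Real.rpow_nonneg ha.le _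
    have hK : 0 < K := by rw [hKdef]; linarith
    have hA : 0 < a / 2 := by linarith
    refine ⟨1, one_pos, Real.exp (K * (K / (a / 2)) ^ (1 / (γ - 1))), Real.exp_pos _, ?_⟩
    intro ξ
    rw [← Real.exp_add, Real.exp_le_exp]
    set r : ℝ := Real.sqrt (ξ.1 ^ 2 + ξ.2 ^ 2) with hrdef
    have hr : 0 ≤ r := Real.sqrt_nonneg _
    have h1 : |ξ.1| ≤ r := by
      rw [hrdef, ← Real.sqrt_sq_eq_abs]
      exact Real.sqrt_le_sqrt (by nlinarith [sq_nonneg ξ.2])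
    have h2 : |ξ.2| ≤ r := by
      rw [hrdef, ← Real.sqrt_sq_eq_abs]
      exact Real.sqrt_le_sqrt (by nlinarith [sq_nonneg ξ.1])
    have hbd := aux_young γ K (a / 2) hγ hK hA r hr
    have hlin : a ^ (1/γ) * (|ξ.1| + |ξ.2|) ≤ 2 * a ^ (1/γ) * r := by nlinarith
    have heqr : (1/2 : ℝ) * a * r ^ γ = a / 2 * r ^ γ := by ring
    have hKr : K * r = 2 * a ^ (1/γ) * r + r := by rw [hKdef]; ring
    linarith
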